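/- Let X be a Banach space and let (A_m)_{m∈ℤ} be a sequence of bounded linear operators on X admitting an exponential dichotomy with constants C, λ > 0. Let f_n : X → X (n ∈ ℤ) satisfy ‖f_n(x) − f_n(y)‖ ≤ c‖x − y‖ for all n, x, y, where 0 < c < (1−e^{−λ})/(2C(1+e^{−λ})); set F_n = A_n + f_n. Then the system x_{n+1} = F_n(x_n) has the ℓ^∞-Lipschitz shadowing property with unique shadowing trajectories: there exists K > 0 such that for every ε > 0 and every sequence (y_n)_{n∈ℤ} ⊂ X with sup_{n∈ℤ} ‖y_{n+1} − F_n(y_n)‖ ≤ ε/K, there exists a unique sequence (x_n)_{n∈ℤ} with x_{n+1} = F_n(x_n) for all n ∈ ℤ and sup_{n∈ℤ} ‖x_n − y_n‖ ≤ ε. -/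

import Mathlib

set_option linter.unusedSectionVars false


/-- The forward products `𝒜(m,n) = A_{m-1} ⋯ A_n` (equal to the identity when `m ≤ n`). -/
noncomputable def calA {X : Type*} [NormedAddCommGroup X] [NormedSpace ℝ X]
    (A : ℤ → X →L[ℝ] X) (m n : ℤ) : X →L[ℝ] X :=
  (List.range (m - n).toNat).foldl (fun B k => (A (n + (k : ℤ))).comp B)
    (ContinuousLinearMap.id ℝ X)

/-- The sequence `(A_m)_{m ∈ ℤ}` admits an exponential dichotomy with constants `C, lam > 0`.
For `m ≤ n`, the operator `𝒜(m,n)` (the inverse of `𝒜(n,m)` restricted to `Ker P_m`)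
is described implicitly: `w = 𝒜(m,n)(Id - P_n) x` iff `w ∈ Ker P_m` and
`𝒜(n,m) w = x - P_n x`. -/
def ExpDichotomy {X : Type*} [NormedAddCommGroup X] [NormedSpace ℝ X]
    (A : ℤ → X →L[ℝ] X) (C lam : ℝ) : Prop :=
  ∃ P : ℤ → X →L[ℝ] X,
    (∀ m, (P m).comp (P m) = P m) ∧
    (∀ m, (P (m + 1)).comp (A m) = (A m).comp (P m)) ∧
    (∀ m, Set.BijOn (A m) (LinearMap.ker (P m : X →ₗ[ℝ] X) : Set X)
      (LinearMap.ker (P (m + 1) : X →ₗ[ℝ] X) : Set X)) ∧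
    (∀ m n : ℤ, n ≤ m → ‖(calA A m n).comp (P n)‖ ≤ C * Real.exp (-lam * (m - n))) ∧
    (∀ m n : ℤ, m ≤ n → ∀ x w : X, w ∈ LinearMap.ker (P m : X →ₗ[ℝ] X) →
      calA A n m w = x - P n x → ‖w‖ ≤ C * Real.exp (-lam * (n - m)) * ‖x‖)

section CalA
variable {X : Type*} [NormedAddCommGroup X] [NormedSpace ℝ X] (A : ℤ → X →L[ℝ] X)

lemma calA_of_le {m n : ℤ} (h : m ≤ n) : calA A m n = ContinuousLinearMap.id ℝ X := by
  unfold calA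
  rw [Int.toNat_of_nonpos (by omega)]
  simp

lemma calA_succ {m n : ℤ} (h : n ≤ m) :
    calA A (m + 1) n = (A m).comp (calA A m n) := by
  unfold calA
  have h1 : (m + 1 - n).toNat = (m - n).toNat + 1 := by omega
  rw [h1, List.range_succ]
  simp only [List.bind_eq_flatMap, List.flatMap_append, List.foldl_append,
    List.flatMap_singleton, List.pure_def, List.foldl_cons, List.foldl_nil]
  have h2 : n + ((m - n).toNat : ℤ) = m := by omega
  rw [h2]

lemma calA_cocycle {k n m : ℤ} (h1 : k ≤ n) (h2 : n ≤ m) :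
    calA A m k = (calA A m n).comp (calA A n k) := by
  have key : ∀ N : ℕ, calA A (n + N) k = (calA A (n + N) n).comp (calA A n k) := by
    intro N
    induction N with
    | zero =>
      simp only [Nat.cast_zero, add_zero]
      rw [calA_of_le A le_rfl]; ext x; simp
    | succ N ih =>
      have hn : (n : ℤ) ≤ n + N := by omega
      have e : (n + (N + 1 : ℕ) : ℤ) = (n + N) + 1 := by push_cast; ring
      rw [e, calA_succ A (h1.trans hn), calA_succ A hn, ih, ContinuousLinearMap.comp_assoc]
  have e : m = n + ((m - n).toNat : ℕ) := by omega
  rw [e]; exact key _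

lemma calA_apply_succ {m n : ℤ} (h : n ≤ m) (x : X) :
    calA A (m + 1) n x = A m (calA A m n x) := by
  rw [calA_succ A h]; rfl

lemma calA_self (n : ℤ) (x : X) : calA A n n x = x := by
  rw [calA_of_le A le_rfl]; rfl

end CalA

section Dich
variable {X : Type*} [NormedAddCommGroup X] [NormedSpace ℝ X]
variable (A P : ℤ → X →L[ℝ] X)

open Classical in
/-- Inverse of `calA A n m` restricted to `ker (P m)`, applied to `x - P n x`. -/
noncomputable def Binv (m n : ℤ) (x : X) : X :=
  if h : ∃ w, P m w = 0 ∧ calA A n m w = x - P n x then h.choose else 0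

variable {A P}

lemma P_idem (hproj : ∀ m, (P m).comp (P m) = P m) (m : ℤ) (x : X) : P m (P m x) = P m x := by
  have := congrArg (fun T : X →L[ℝ] X => T x) (hproj m)
  simpa using this

lemma sub_proj_mem_ker (hproj : ∀ m, (P m).comp (P m) = P m) (m : ℤ) (x : X) : P m (x - P m x) = 0 := by
  rw [map_sub, P_idem hproj, sub_self]

lemma calA_comm_P (hcomm : ∀ m, (P (m + 1)).comp (A m) = (A m).comp (P m)) {n m : ℤ} (h : n ≤ m) :
    (P m).comp (calA A m n) = (calA A m n).comp (P n) := by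
  have key : ∀ N : ℕ, (P (n + N)).comp (calA A (n + N) n)
      = (calA A (n + N) n).comp (P n) := by
    intro N
    induction N with
    | zero => simp only [Nat.cast_zero, add_zero]; rw [calA_of_le A le_rfl]; ext x; simp
    | succ N ih =>
      have hn : (n : ℤ) ≤ n + N := by omega
      have e : (n + (N + 1 : ℕ) : ℤ) = (n + N) + 1 := by push_cast; ring
      rw [e, calA_succ A hn, ← ContinuousLinearMap.comp_assoc, hcomm,
        ContinuousLinearMap.comp_assoc, ih, ← ContinuousLinearMap.comp_assoc]
  have e : m = n + ((m - n).toNat : ℕ) := by omega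
  rw [e]; exact key _

lemma calA_bijOn (hbij : ∀ m, Set.BijOn (A m) (LinearMap.ker (P m : X →ₗ[ℝ] X) : Set X)
    (LinearMap.ker (P (m + 1) : X →ₗ[ℝ] X) : Set X)) {n m : ℤ} (h : n ≤ m) :
    Set.BijOn (calA A m n) (LinearMap.ker (P n : X →ₗ[ℝ] X) : Set X)
      (LinearMap.ker (P m : X →ₗ[ℝ] X) : Set X) := by
  have key : ∀ N : ℕ, Set.BijOn (calA A (n + N) n) (LinearMap.ker (P n : X →ₗ[ℝ] X) : Set X)
      (LinearMap.ker (P (n + N) : X →ₗ[ℝ] X) : Set X) := by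
    intro N
    induction N with
    | zero =>
      simp only [Nat.cast_zero, add_zero]
      rw [calA_of_le A le_rfl]
      exact Set.bijOn_id _
    | succ N ih =>
      have hn : (n : ℤ) ≤ n + N := by omega
      have e : (n + (N + 1 : ℕ) : ℤ) = (n + N) + 1 := by push_cast; ring
      rw [e, calA_succ A hn]
      have : ⇑((A (n + N)).comp (calA A (n + N) n)) = (A (n + N)) ∘ (calA A (n + N) n) := rfl
      rw [this]
      exact (hbij (n + N)).comp ih
  have e : m = n + ((m - n).toNat : ℕ) := by omega
  rw [e]; exact key _

lemma Binv_exists (hproj : ∀ m, (P m).comp (P m) = P m) (hbij : ∀ m, Set.BijOn (A m) (LinearMap.ker (P m : X →ₗ[ℝ] X) : Set X)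
    (LinearMap.ker (P (m + 1) : X →ₗ[ℝ] X) : Set X)) {m n : ℤ} (h : m ≤ n) (x : X) :
    ∃ w, P m w = 0 ∧ calA A n m w = x - P n x := by
  have hmem : x - P n x ∈ (LinearMap.ker (P n : X →ₗ[ℝ] X) : Set X) := by
    simp only [SetLike.mem_coe, LinearMap.mem_ker]
    exact sub_proj_mem_ker hproj n x
  obtain ⟨w, hw, hw2⟩ := (calA_bijOn (P := P) hbij h).surjOn hmem
  exact ⟨w, by simpa using hw, hw2⟩

lemma Binv_spec (hproj : ∀ m, (P m).comp (P m) = P m) (hbij : ∀ m, Set.BijOn (A m) (LinearMap.ker (P m : X →ₗ[ℝ] X) : Set X)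
    (LinearMap.ker (P (m + 1) : X →ₗ[ℝ] X) : Set X)) {m n : ℤ} (h : m ≤ n) (x : X) :
    P m (Binv A P m n x) = 0 ∧ calA A n m (Binv A P m n x) = x - P n x := by
  rw [Binv, dif_pos (Binv_exists hproj hbij h x)]
  exact (Binv_exists hproj hbij h x).choose_spec

lemma Binv_eq (hproj : ∀ m, (P m).comp (P m) = P m) (hbij : ∀ m, Set.BijOn (A m) (LinearMap.ker (P m : X →ₗ[ℝ] X) : Set X)
    (LinearMap.ker (P (m + 1) : X →ₗ[ℝ] X) : Set X)) {m n : ℤ} (h : m ≤ n) {w x : X} (hw : P m w = 0)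
    (hs : calA A n m w = x - P n x) : Binv A P m n x = w := by
  obtain ⟨h1, h2⟩ := Binv_spec hproj hbij h x
  refine (calA_bijOn (P := P) hbij h).injOn ?_ ?_ (by rw [h2, hs])
  · simpa using h1
  · simpa using hw

lemma Binv_sub (hproj : ∀ m, (P m).comp (P m) = P m) (hbij : ∀ m, Set.BijOn (A m) (LinearMap.ker (P m : X →ₗ[ℝ] X) : Set X)
    (LinearMap.ker (P (m + 1) : X →ₗ[ℝ] X) : Set X)) {m n : ℤ} (h : m ≤ n) (x y : X) :
    Binv A P m n (x - y) = Binv A P m n x - Binv A P m n y := by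
  obtain ⟨hx1, hx2⟩ := Binv_spec hproj hbij h x
  obtain ⟨hy1, hy2⟩ := Binv_spec hproj hbij h y
  refine Binv_eq hproj hbij h ?_ ?_
  · rw [map_sub, hx1, hy1, sub_self]
  · rw [map_sub, hx2, hy2, map_sub]; abel

lemma Binv_self (hproj : ∀ m, (P m).comp (P m) = P m) (hbij : ∀ m, Set.BijOn (A m) (LinearMap.ker (P m : X →ₗ[ℝ] X) : Set X)
    (LinearMap.ker (P (m + 1) : X →ₗ[ℝ] X) : Set X)) (m : ℤ) (x : X) : Binv A P m m x = x - P m x := by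
  refine Binv_eq hproj hbij le_rfl (sub_proj_mem_ker hproj m x) ?_
  rw [calA_of_le A le_rfl]; rfl

lemma A_Binv (hproj : ∀ m, (P m).comp (P m) = P m) (hbij : ∀ m, Set.BijOn (A m) (LinearMap.ker (P m : X →ₗ[ℝ] X) : Set X)
    (LinearMap.ker (P (m + 1) : X →ₗ[ℝ] X) : Set X)) {m n : ℤ} (h : m + 1 ≤ n) (x : X) :
    A m (Binv A P m n x) = Binv A P (m + 1) n x := by
  obtain ⟨h1, h2⟩ := Binv_spec hproj hbij (by omega : m ≤ n) x
  refine (Binv_eq hproj hbij h ?_ ?_).symm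
  · have := (hbij m).mapsTo (by simpa using h1)
    simpa using this
  · have hco : calA A n m = (calA A n (m + 1)).comp (calA A (m + 1) m) :=
      calA_cocycle A (by omega) h
    have : calA A (m + 1) m (Binv A P m n x) = A m (Binv A P m n x) := by
      rw [calA_succ A le_rfl, calA_of_le A le_rfl]; rfl
    rw [← this, ← ContinuousLinearMap.comp_apply, ← hco, h2]

end Dich

section Green
open Filter Topology
variable {X : Type*} [NormedAddCommGroup X] [NormedSpace ℝ X] [CompleteSpace X]
variable (A P : ℤ → X →L[ℝ] X)

/-- The Green's function / Perron operator applied to a bounded sequence. -/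
noncomputable def green (h : ℤ → X) (n : ℤ) : X :=
  (∑' j : ℕ, calA A n (n - j) ((P (n - j)) (h (n - 1 - j)))) -
  ∑' j : ℕ, Binv A P n (n + 1 + j) (h (n + j))

variable {A P}
variable {C lam M : ℝ} {h : ℤ → X}

lemma exp_pow (lam : ℝ) (j : ℕ) : Real.exp ((j : ℝ) * (-lam)) = Real.exp (-lam) ^ j :=
  Real.exp_nat_mul _ _

lemma term1_norm (hC : 0 < C)
    (hstab : ∀ m n : ℤ, n ≤ m → ‖(calA A m n).comp (P n)‖ ≤ C * Real.exp (-lam * (m - n)))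
    (hb : ∀ k, ‖h k‖ ≤ M) (n : ℤ) (j : ℕ) :
    ‖calA A n (n - j) ((P (n - j)) (h (n - 1 - j)))‖ ≤ C * M * Real.exp (-lam) ^ j := by
  have e0 : calA A n (n - j) ((P (n - j)) (h (n - 1 - j)))
      = ((calA A n (n - j)).comp (P (n - j))) (h (n - 1 - j)) := rfl
  have h1 := ((calA A n (n - j)).comp (P (n - j))).le_opNorm (h (n - 1 - j))
  have h2 := hstab n (n - j) (by omega)
  have e1 : -lam * ((n : ℝ) - ((n - (j : ℤ) : ℤ) : ℝ)) = (j : ℝ) * (-lam) := by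
    push_cast; ring
  rw [e0]
  calc ‖((calA A n (n - j)).comp (P (n - j))) (h (n - 1 - j))‖
      ≤ ‖(calA A n (n - j)).comp (P (n - j))‖ * ‖h (n - 1 - j)‖ := h1
    _ ≤ (C * Real.exp (-lam) ^ j) * M := by
        refine mul_le_mul ?_ (hb _) (norm_nonneg _) (by positivity)
        calc ‖(calA A n (n - j)).comp (P (n - j))‖
            ≤ C * Real.exp (-lam * ((n : ℝ) - ((n - (j : ℤ) : ℤ) : ℝ))) := by
              convert h2 using 3 <;> (push_cast; ring)
          _ = C * Real.exp (-lam) ^ j := by rw [e1, exp_pow]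
    _ = C * M * Real.exp (-lam) ^ j := by ring

lemma term2_norm (hC : 0 < C)
    (hproj : ∀ m, (P m).comp (P m) = P m)
    (hbij : ∀ m, Set.BijOn (A m) (LinearMap.ker (P m : X →ₗ[ℝ] X) : Set X)
      (LinearMap.ker (P (m + 1) : X →ₗ[ℝ] X) : Set X))
    (hunst : ∀ m n : ℤ, m ≤ n → ∀ x w : X, w ∈ LinearMap.ker (P m : X →ₗ[ℝ] X) →
      calA A n m w = x - P n x → ‖w‖ ≤ C * Real.exp (-lam * (n - m)) * ‖x‖)
    (hb : ∀ k, ‖h k‖ ≤ M) {m n : ℤ} (hmn : m ≤ n) (k : ℤ) (j : ℕ) (hj : (n : ℝ) - m = j) :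
    ‖Binv A P m n (h k)‖ ≤ C * M * Real.exp (-lam) ^ j := by
  obtain ⟨h1, h2⟩ := Binv_spec hproj hbij hmn (h k)
  have h3 := hunst m n hmn (h k) _ (LinearMap.mem_ker.mpr h1) h2
  calc ‖Binv A P m n (h k)‖ ≤ C * Real.exp (-lam * ((n : ℝ) - m)) * ‖h k‖ := h3
    _ ≤ (C * Real.exp (-lam) ^ j) * M := by
        rw [hj]
        refine mul_le_mul ?_ (hb _) (norm_nonneg _) (by positivity)
        rw [show -lam * (j : ℝ) = (j : ℝ) * (-lam) by ring, exp_pow]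
    _ = C * M * Real.exp (-lam) ^ j := by ring

lemma geom_summable (hlam : 0 < lam) (a : ℝ) :
    Summable (fun j : ℕ => a * Real.exp (-lam) ^ j) :=
  (summable_geometric_of_lt_one (Real.exp_pos _).le
    (Real.exp_lt_one_iff.mpr (by linarith))).mul_left a

lemma summable1 (hC : 0 < C) (hlam : 0 < lam)
    (hstab : ∀ m n : ℤ, n ≤ m → ‖(calA A m n).comp (P n)‖ ≤ C * Real.exp (-lam * (m - n)))
    (hb : ∀ k, ‖h k‖ ≤ M) (n : ℤ) :
    Summable (fun j : ℕ => calA A n (n - j) ((P (n - j)) (h (n - 1 - j)))) :=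
  Summable.of_norm_bounded (geom_summable hlam (C * M))
    (term1_norm hC hstab hb n)

lemma summable2 (hC : 0 < C) (hlam : 0 < lam)
    (hproj : ∀ m, (P m).comp (P m) = P m)
    (hbij : ∀ m, Set.BijOn (A m) (LinearMap.ker (P m : X →ₗ[ℝ] X) : Set X)
      (LinearMap.ker (P (m + 1) : X →ₗ[ℝ] X) : Set X))
    (hunst : ∀ m n : ℤ, m ≤ n → ∀ x w : X, w ∈ LinearMap.ker (P m : X →ₗ[ℝ] X) →
      calA A n m w = x - P n x → ‖w‖ ≤ C * Real.exp (-lam * (n - m)) * ‖x‖)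
    (hb : ∀ k, ‖h k‖ ≤ M) (n : ℤ) :
    Summable (fun j : ℕ => Binv A P n (n + 1 + j) (h (n + j))) := by
  refine Summable.of_norm_bounded (geom_summable hlam (C * M * Real.exp (-lam))) (fun j => ?_)
  have := term2_norm hC hproj hbij hunst hb (m := n) (n := n + 1 + j) (by omega) (n + j)
    (j := j + 1) (by push_cast; ring)
  calc ‖Binv A P n (n + 1 + j) (h (n + j))‖ ≤ C * M * Real.exp (-lam) ^ (j + 1) := this
    _ = C * M * Real.exp (-lam) * Real.exp (-lam) ^ j := by ring

lemma summable2' (hC : 0 < C) (hlam : 0 < lam)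
    (hproj : ∀ m, (P m).comp (P m) = P m)
    (hbij : ∀ m, Set.BijOn (A m) (LinearMap.ker (P m : X →ₗ[ℝ] X) : Set X)
      (LinearMap.ker (P (m + 1) : X →ₗ[ℝ] X) : Set X))
    (hunst : ∀ m n : ℤ, m ≤ n → ∀ x w : X, w ∈ LinearMap.ker (P m : X →ₗ[ℝ] X) →
      calA A n m w = x - P n x → ‖w‖ ≤ C * Real.exp (-lam * (n - m)) * ‖x‖)
    (hb : ∀ k, ‖h k‖ ≤ M) (n : ℤ) :
    Summable (fun j : ℕ => Binv A P (n + 1) (n + 1 + j) (h (n + j))) := by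
  refine Summable.of_norm_bounded (geom_summable hlam (C * M)) (fun j => ?_)
  exact term2_norm hC hproj hbij hunst hb (m := n + 1) (n := n + 1 + j) (by omega) (n + j)
    (j := j) (by push_cast; ring)

lemma green_norm (hC : 0 < C) (hlam : 0 < lam)
    (hproj : ∀ m, (P m).comp (P m) = P m)
    (hbij : ∀ m, Set.BijOn (A m) (LinearMap.ker (P m : X →ₗ[ℝ] X) : Set X)
      (LinearMap.ker (P (m + 1) : X →ₗ[ℝ] X) : Set X))
    (hstab : ∀ m n : ℤ, n ≤ m → ‖(calA A m n).comp (P n)‖ ≤ C * Real.exp (-lam * (m - n)))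
    (hunst : ∀ m n : ℤ, m ≤ n → ∀ x w : X, w ∈ LinearMap.ker (P m : X →ₗ[ℝ] X) →
      calA A n m w = x - P n x → ‖w‖ ≤ C * Real.exp (-lam * (n - m)) * ‖x‖)
    (hb : ∀ k, ‖h k‖ ≤ M) (n : ℤ) :
    ‖green A P h n‖ ≤ C * (1 + Real.exp (-lam)) / (1 - Real.exp (-lam)) * M := by
  set r := Real.exp (-lam) with hr
  have hr0 : 0 < r := Real.exp_pos _
  have hr1 : r < 1 := Real.exp_lt_one_iff.mpr (by linarith)
  have hM : 0 ≤ M := (norm_nonneg (h 0)).trans (hb 0)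
  have hgeom : Summable (fun j : ℕ => r ^ j) :=
    summable_geometric_of_lt_one hr0.le hr1
  have snorm1 : Summable (fun j : ℕ => ‖calA A n (n - j) ((P (n - j)) (h (n - 1 - j)))‖) :=
    Summable.of_nonneg_of_le (fun j => norm_nonneg _) (term1_norm hC hstab hb n)
      (geom_summable hlam (C * M))
  have snorm2 : Summable (fun j : ℕ => ‖Binv A P n (n + 1 + j) (h (n + j))‖) := by
    refine Summable.of_nonneg_of_le (fun j => norm_nonneg _) (fun j => ?_)
      (geom_summable hlam (C * M * r))
    have := term2_norm hC hproj hbij hunst hb (m := n) (n := n + 1 + j) (by omega) (n + j)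
      (j := j + 1) (by push_cast; ring)
    calc ‖Binv A P n (n + 1 + j) (h (n + j))‖ ≤ C * M * r ^ (j + 1) := this
      _ = C * M * r * r ^ j := by ring
  have b1 : ‖∑' j : ℕ, calA A n (n - j) ((P (n - j)) (h (n - 1 - j)))‖
      ≤ C * M * (1 - r)⁻¹ := by
    calc ‖∑' j : ℕ, calA A n (n - j) ((P (n - j)) (h (n - 1 - j)))‖
        ≤ ∑' j : ℕ, ‖calA A n (n - j) ((P (n - j)) (h (n - 1 - j)))‖ :=
          norm_tsum_le_tsum_norm snorm1
      _ ≤ ∑' j : ℕ, C * M * r ^ j :=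
          Summable.tsum_le_tsum (term1_norm hC hstab hb n) snorm1 (geom_summable hlam (C * M))
      _ = C * M * (1 - r)⁻¹ := by
          rw [tsum_mul_left, tsum_geometric_of_lt_one hr0.le hr1]
  have b2 : ‖∑' j : ℕ, Binv A P n (n + 1 + j) (h (n + j))‖
      ≤ C * M * r * (1 - r)⁻¹ := by
    calc ‖∑' j : ℕ, Binv A P n (n + 1 + j) (h (n + j))‖
        ≤ ∑' j : ℕ, ‖Binv A P n (n + 1 + j) (h (n + j))‖ := norm_tsum_le_tsum_norm snorm2
      _ ≤ ∑' j : ℕ, C * M * r * r ^ j := by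
          refine Summable.tsum_le_tsum (fun j => ?_) snorm2 (geom_summable hlam (C * M * r))
          have := term2_norm hC hproj hbij hunst hb (m := n) (n := n + 1 + j) (by omega)
            (n + j) (j := j + 1) (by push_cast; ring)
          calc ‖Binv A P n (n + 1 + j) (h (n + j))‖ ≤ C * M * r ^ (j + 1) := this
            _ = C * M * r * r ^ j := by ring
      _ = C * M * r * (1 - r)⁻¹ := by
          rw [tsum_mul_left, tsum_geometric_of_lt_one hr0.le hr1]
  calc ‖green A P h n‖
      ≤ ‖∑' j : ℕ, calA A n (n - j) ((P (n - j)) (h (n - 1 - j)))‖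
        + ‖∑' j : ℕ, Binv A P n (n + 1 + j) (h (n + j))‖ := norm_sub_le _ _
    _ ≤ C * M * (1 - r)⁻¹ + C * M * r * (1 - r)⁻¹ := add_le_add b1 b2
    _ = C * (1 + r) / (1 - r) * M := by
        have : (1 : ℝ) - r ≠ 0 := by linarith
        field_simp

lemma green_rec (hC : 0 < C) (hlam : 0 < lam)
    (hproj : ∀ m, (P m).comp (P m) = P m)
    (hbij : ∀ m, Set.BijOn (A m) (LinearMap.ker (P m : X →ₗ[ℝ] X) : Set X)
      (LinearMap.ker (P (m + 1) : X →ₗ[ℝ] X) : Set X))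
    (hstab : ∀ m n : ℤ, n ≤ m → ‖(calA A m n).comp (P n)‖ ≤ C * Real.exp (-lam * (m - n)))
    (hunst : ∀ m n : ℤ, m ≤ n → ∀ x w : X, w ∈ LinearMap.ker (P m : X →ₗ[ℝ] X) →
      calA A n m w = x - P n x → ‖w‖ ≤ C * Real.exp (-lam * (n - m)) * ‖x‖)
    (hb : ∀ k, ‖h k‖ ≤ M) (n : ℤ) :
    green A P h (n + 1) = A n (green A P h n) + h n := by
  have s1n := summable1 hC hlam hstab hb n
  have s1n1 := summable1 hC hlam hstab hb (n + 1)
  have s2n := summable2 hC hlam hproj hbij hunst hb n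
  have s2n1 := summable2 hC hlam hproj hbij hunst hb (n + 1)
  have s2' := summable2' hC hlam hproj hbij hunst hb n
  -- first sum
  have e1 : (∑' j : ℕ, calA A (n + 1) (n + 1 - j) ((P (n + 1 - j)) (h (n + 1 - 1 - j))))
      = P (n + 1) (h n)
        + A n (∑' j : ℕ, calA A n (n - j) ((P (n - j)) (h (n - 1 - j)))) := by
    rw [Summable.tsum_eq_zero_add s1n1, ContinuousLinearMap.map_tsum (A n) s1n]
    congr 1
    · simp only [Nat.cast_zero, sub_zero]
      rw [show (n + 1 - 1 : ℤ) = n by ring, calA_self]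
    · refine tsum_congr (fun j => ?_)
      have i1 : (n + 1 - ((j : ℕ) + 1 : ℕ) : ℤ) = n - j := by push_cast; ring
      have i2 : (n + 1 - 1 - ((j : ℕ) + 1 : ℕ) : ℤ) = n - 1 - j := by push_cast; ring
      rw [i1, i2, ← calA_apply_succ A (by omega : n - (j : ℤ) ≤ n)]
  -- second sum
  have e2 : A n (∑' j : ℕ, Binv A P n (n + 1 + j) (h (n + j)))
      = (h n - P (n + 1) (h n))
        + ∑' j : ℕ, Binv A P (n + 1) (n + 1 + 1 + j) (h (n + 1 + j)) := by
    rw [ContinuousLinearMap.map_tsum (A n) s2n]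
    have step : ∀ j : ℕ, A n (Binv A P n (n + 1 + j) (h (n + j)))
        = Binv A P (n + 1) (n + 1 + j) (h (n + j)) := fun j =>
      A_Binv hproj hbij (by omega) _
    rw [tsum_congr step, Summable.tsum_eq_zero_add s2']
    congr 1
    · simp only [Nat.cast_zero, add_zero]
      exact Binv_self hproj hbij (n + 1) (h n)
    · refine tsum_congr (fun j => ?_)
      have i1 : (n + 1 + ((j : ℕ) + 1 : ℕ) : ℤ) = n + 1 + 1 + j := by push_cast; ring
      have i2 : (n + ((j : ℕ) + 1 : ℕ) : ℤ) = n + 1 + j := by push_cast; ring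
      rw [i1, i2]
  have : green A P h (n + 1)
      = (∑' j : ℕ, calA A (n + 1) (n + 1 - j) ((P (n + 1 - j)) (h (n + 1 - 1 - j))))
        - ∑' j : ℕ, Binv A P (n + 1) (n + 1 + 1 + j) (h (n + 1 + j)) := rfl
  rw [this, e1, eq_sub_of_add_eq' e2.symm]
  rw [green, map_sub]
  abel

lemma green_sub {h' : ℤ → X} {M' : ℝ} (hC : 0 < C) (hlam : 0 < lam)
    (hproj : ∀ m, (P m).comp (P m) = P m)
    (hbij : ∀ m, Set.BijOn (A m) (LinearMap.ker (P m : X →ₗ[ℝ] X) : Set X)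
      (LinearMap.ker (P (m + 1) : X →ₗ[ℝ] X) : Set X))
    (hstab : ∀ m n : ℤ, n ≤ m → ‖(calA A m n).comp (P n)‖ ≤ C * Real.exp (-lam * (m - n)))
    (hunst : ∀ m n : ℤ, m ≤ n → ∀ x w : X, w ∈ LinearMap.ker (P m : X →ₗ[ℝ] X) →
      calA A n m w = x - P n x → ‖w‖ ≤ C * Real.exp (-lam * (n - m)) * ‖x‖)
    (hb : ∀ k, ‖h k‖ ≤ M) (hb' : ∀ k, ‖h' k‖ ≤ M') (n : ℤ) :
    green A P h n - green A P h' n = green A P (fun k => h k - h' k) n := by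
  have s1 := summable1 hC hlam hstab hb n
  have s1' := summable1 hC hlam hstab hb' n
  have s2 := summable2 hC hlam hproj hbij hunst hb n
  have s2' := summable2 hC hlam hproj hbij hunst hb' n
  rw [green, green, green, sub_sub_sub_comm, ← Summable.tsum_sub s1 s1', ← Summable.tsum_sub s2 s2']
  congr 1
  · refine tsum_congr (fun j => ?_)
    rw [← map_sub, ← map_sub]
  · refine tsum_congr (fun j => ?_)
    rw [← Binv_sub hproj hbij (by omega)]

end Green

section Homog
open Filter Topology
variable {X : Type*} [NormedAddCommGroup X] [NormedSpace ℝ X]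
variable {A P : ℤ → X →L[ℝ] X} {C lam M : ℝ}

lemma homog_zero (hC : 0 < C) (hlam : 0 < lam)
    (hproj : ∀ m, (P m).comp (P m) = P m)
    (hcomm : ∀ m, (P (m + 1)).comp (A m) = (A m).comp (P m))
    (hbij : ∀ m, Set.BijOn (A m) (LinearMap.ker (P m : X →ₗ[ℝ] X) : Set X)
      (LinearMap.ker (P (m + 1) : X →ₗ[ℝ] X) : Set X))
    (hstab : ∀ m n : ℤ, n ≤ m → ‖(calA A m n).comp (P n)‖ ≤ C * Real.exp (-lam * (m - n)))
    (hunst : ∀ m n : ℤ, m ≤ n → ∀ x w : X, w ∈ LinearMap.ker (P m : X →ₗ[ℝ] X) →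
      calA A n m w = x - P n x → ‖w‖ ≤ C * Real.exp (-lam * (n - m)) * ‖x‖)
    {v : ℤ → X} (hbd : ∀ n, ‖v n‖ ≤ M) (hrec : ∀ n, v (n + 1) = A n (v n)) :
    ∀ n, v n = 0 := by
  set r := Real.exp (-lam) with hr
  have hr0 : 0 < r := Real.exp_pos _
  have hr1 : r < 1 := Real.exp_lt_one_iff.mpr (by linarith)
  have hM : 0 ≤ M := (norm_nonneg (v 0)).trans (hbd 0)
  have hlim : Tendsto (fun N : ℕ => C * M * r ^ N) atTop (nhds 0) := by
    have := (tendsto_pow_atTop_nhds_zero_of_lt_one hr0.le hr1).const_mul (C * M)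
    simpa using this
  -- v n = calA A n m (v m) for m ≤ n
  have hsol : ∀ m : ℤ, ∀ N : ℕ, v (m + N) = calA A (m + N) m (v m) := by
    intro m N
    induction N with
    | zero => simp [calA_self]
    | succ N ih =>
      have e : (m + (N + 1 : ℕ) : ℤ) = (m + N) + 1 := by push_cast; ring
      rw [e, hrec, ih, ← calA_apply_succ A (by omega)]
  -- step 1 : P n (v n) = 0
  have step1 : ∀ n, P n (v n) = 0 := by
    intro n
    have key : ∀ N : ℕ, ‖P n (v n)‖ ≤ C * M * r ^ N := by
      intro N
      have h1 : v n = calA A n (n - N) (v (n - N)) := by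
        have := hsol (n - N) N
        rw [show (n - N + N : ℤ) = n by ring] at this
        exact this
      have h2 : P n (v n) = ((calA A n (n - N)).comp (P (n - N))) (v (n - N)) := by
        rw [h1, ← ContinuousLinearMap.comp_apply, calA_comm_P hcomm (by omega)]
      rw [h2]
      calc ‖((calA A n (n - N)).comp (P (n - N))) (v (n - N))‖
          ≤ ‖(calA A n (n - N)).comp (P (n - N))‖ * ‖v (n - N)‖ :=
            ContinuousLinearMap.le_opNorm _ _
        _ ≤ (C * r ^ N) * M := by
            refine mul_le_mul ?_ (hbd _) (norm_nonneg _) (by positivity)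
            have h3 := hstab n (n - N) (by omega)
            have e1 : -lam * ((n : ℝ) - ((n - (N : ℤ) : ℤ) : ℝ)) = (N : ℝ) * (-lam) := by
              push_cast; ring
            calc ‖(calA A n (n - N)).comp (P (n - N))‖
                ≤ C * Real.exp (-lam * ((n : ℝ) - ((n - (N : ℤ) : ℤ) : ℝ))) := h3
              _ = C * r ^ N := by rw [e1, exp_pow]
        _ = C * M * r ^ N := by ring
    have : ‖P n (v n)‖ ≤ 0 := ge_of_tendsto' hlim key
    simpa using norm_le_zero_iff.mp this
  -- step 2 : v n = 0
  intro n
  have key : ∀ N : ℕ, ‖v n‖ ≤ C * M * r ^ N := by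
    intro N
    have h1 : calA A (n + N) n (v n) = v (n + N) - P (n + N) (v (n + N)) := by
      rw [step1 (n + N), sub_zero, hsol n N]
    have h2 := hunst n (n + N) (by omega) (v (n + N)) (v n)
      (LinearMap.mem_ker.mpr (step1 n)) h1
    have e1 : -lam * (((n + (N : ℤ) : ℤ) : ℝ) - (n : ℝ)) = (N : ℝ) * (-lam) := by
      push_cast; ring
    calc ‖v n‖ ≤ C * Real.exp (-lam * (((n + (N : ℤ) : ℤ) : ℝ) - (n : ℝ))) * ‖v (n + N)‖ := h2
      _ ≤ (C * r ^ N) * M := by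
          refine mul_le_mul ?_ (hbd _) (norm_nonneg _) (by positivity)
          rw [e1, exp_pow]
      _ = C * M * r ^ N := by ring
  have : ‖v n‖ ≤ 0 := ge_of_tendsto' hlim key
  exact norm_le_zero_iff.mp this

end Homog


open Filter Topology BoundedContinuousFunction

/-- Theorem 3.7: if `(A_m)_{m∈ℤ}` admits an exponential dichotomy with constants `C, lam > 0`
and the `f_n` are `c`-Lipschitz with `0 < c < (1-e^{-lam})/(2C(1+e^{-lam}))`, then the system
`x_{n+1} = A_n x_n + f_n(x_n)` has the `ℓ^∞`-Lipschitz shadowing property, and the shadowing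
trajectory is unique. -/
theorem dichotomy_lipschitz_shadowing_unique
    {X : Type*} [NormedAddCommGroup X] [NormedSpace ℝ X] [CompleteSpace X]
    (A : ℤ → X →L[ℝ] X) (C lam : ℝ) (hC : 0 < C) (hlam : 0 < lam)
    (h : ExpDichotomy A C lam)
    (f : ℤ → X → X) (c : ℝ) (hc : 0 < c)
    (hcsmall : c < (1 - Real.exp (-lam)) / (2 * C * (1 + Real.exp (-lam))))
    (hf : ∀ n : ℤ, ∀ x y : X, ‖f n x - f n y‖ ≤ c * ‖x - y‖) :
    ∃ K : ℝ, 0 < K ∧ ∀ ε : ℝ, 0 < ε → ∀ y : ℤ → X,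
      (∀ n : ℤ, ‖y (n + 1) - (A n (y n) + f n (y n))‖ ≤ ε / K) →
      ∃! x : ℤ → X, (∀ n : ℤ, x (n + 1) = A n (x n) + f n (x n)) ∧
        ∀ n : ℤ, ‖x n - y n‖ ≤ ε := by
  obtain ⟨P, hproj, hcomm, hbij, hstab, hunst⟩ := h
  set r := Real.exp (-lam) with hr
  have hr0 : 0 < r := Real.exp_pos _
  have hr1 : r < 1 := Real.exp_lt_one_iff.mpr (by linarith)
  set L := C * (1 + r) / (1 - r) with hL
  have hL0 : 0 < L := div_pos (by positivity) (by linarith)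
  have hLc : L * c < 1 / 2 := by
    have h2 : (0:ℝ) < 2 * C * (1 + r) := by positivity
    calc L * c < L * ((1 - r) / (2 * C * (1 + r))) := by
          exact mul_lt_mul_of_pos_left hcsmall hL0
      _ = 1 / 2 := by
          have h1 : (1:ℝ) - r ≠ 0 := by linarith
          have h3 : (1:ℝ) + r ≠ 0 := by linarith
          have h4 : C ≠ 0 := ne_of_gt hC
          rw [hL]
          field_simp
  refine ⟨2 * L, by positivity, fun ε hε y hy => ?_⟩
  set d : ℤ → X := fun n => A n (y n) + f n (y n) - y (n + 1) with hd
  have hdb : ∀ n, ‖d n‖ ≤ ε / (2 * L) := by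
    intro n
    rw [hd, ← norm_neg]
    simpa [neg_sub] using hy n
  have hε2L : 0 ≤ ε / (2 * L) := by positivity
  -- the nonlinear sequence associated to z
  set hs : (ℤ →ᵇ X) → ℤ → X := fun z k => (f k (y k + z k) - f k (y k)) + d k with hhs
  have hsb : ∀ z : ℤ →ᵇ X, ∀ k, ‖hs z k‖ ≤ c * ‖z‖ + ε / (2 * L) := by
    intro z k
    refine (norm_add_le _ _).trans (add_le_add ?_ (hdb k))
    calc ‖f k (y k + z k) - f k (y k)‖ ≤ c * ‖(y k + z k) - y k‖ := hf k _ _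
      _ = c * ‖z k‖ := by rw [add_sub_cancel_left]
      _ ≤ c * ‖z‖ := by
          exact mul_le_mul_of_nonneg_left (z.norm_coe_le_norm k) hc.le
  have hsdiff : ∀ z z' : ℤ →ᵇ X, ∀ k, ‖hs z k - hs z' k‖ ≤ c * dist z z' := by
    intro z z' k
    have e : hs z k - hs z' k = f k (y k + z k) - f k (y k + z' k) := by
      simp only [hhs]; abel
    rw [e]
    calc ‖f k (y k + z k) - f k (y k + z' k)‖ ≤ c * ‖(y k + z k) - (y k + z' k)‖ := hf k _ _
      _ = c * dist (z k) (z' k) := by rw [add_sub_add_left_eq_sub, dist_eq_norm]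
      _ ≤ c * dist z z' := mul_le_mul_of_nonneg_left (z.dist_coe_le_dist (g := z') k) hc.le
  -- the fixed-point map
  set Φ : (ℤ →ᵇ X) → (ℤ →ᵇ X) := fun z =>
    BoundedContinuousFunction.ofNormedAddCommGroup (green A P (hs z))
      continuous_of_discreteTopology (L * (c * ‖z‖ + ε / (2 * L)))
      (fun n => green_norm hC hlam hproj hbij hstab hunst (hsb z) n) with hΦ
  have hΦcoe : ∀ z : ℤ →ᵇ X, ∀ n : ℤ, Φ z n = green A P (hs z) n := fun z n => rfl
  -- Lipschitz estimate
  have hlip : ∀ z z' : ℤ →ᵇ X, dist (Φ z) (Φ z') ≤ (L * c) * dist z z' := by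
    intro z z'
    rw [BoundedContinuousFunction.dist_le (by positivity)]
    intro n
    rw [dist_eq_norm, hΦcoe, hΦcoe,
      green_sub hC hlam hproj hbij hstab hunst (hsb z) (hsb z') n]
    calc ‖green A P (fun k => hs z k - hs z' k) n‖
        ≤ C * (1 + r) / (1 - r) * (c * dist z z') :=
          green_norm hC hlam hproj hbij hstab hunst (fun k => hsdiff z z' k) n
      _ = (L * c) * dist z z' := by rw [hL]; ring
  have hcontr : ContractingWith (L * c).toNNReal Φ := by
    constructor
    · rw [← NNReal.coe_lt_one, Real.coe_toNNReal _ (by positivity)]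
      linarith
    · refine LipschitzWith.of_dist_le_mul (fun z z' => ?_)
      rw [Real.coe_toNNReal _ (by positivity)]
      exact hlip z z'
  set z₀ : ℤ →ᵇ X := ContractingWith.fixedPoint Φ hcontr with hz₀
  have hfix : Φ z₀ = z₀ := hcontr.fixedPoint_isFixedPt
  -- norm bound on the fixed point
  have hz₀norm : ‖z₀‖ ≤ ε := by
    have h1 : ‖Φ z₀‖ ≤ L * (c * ‖z₀‖ + ε / (2 * L)) :=
      BoundedContinuousFunction.norm_ofNormedAddCommGroup_le _ (by positivity) _
    rw [hfix] at h1
    have h2 : L * (ε / (2 * L)) = ε / 2 := by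
      field_simp
    nlinarith [norm_nonneg z₀]
  -- the shadowing trajectory
  set x : ℤ → X := fun n => y n + z₀ n with hx
  have hrecz : ∀ n, z₀ (n + 1) = A n (z₀ n) + hs z₀ n := by
    intro n
    conv_lhs => rw [← hfix]
    rw [hΦcoe, green_rec hC hlam hproj hbij hstab hunst (hsb z₀) n]
    congr 2
    exact (congrArg (fun g : ℤ →ᵇ X => g n) hfix).symm ▸ (hΦcoe z₀ n).symm
  have hxtraj : ∀ n, x (n + 1) = A n (x n) + f n (x n) := by
    intro n
    rw [hx]
    simp only
    rw [hrecz n, hhs, hd]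
    simp only [map_add]
    abel
  refine ⟨x, ⟨hxtraj, fun n => ?_⟩, ?_⟩
  · have e : x n - y n = z₀ n := add_sub_cancel_left (y n) (z₀ n)
    rw [e]
    exact (z₀.norm_coe_le_norm n).trans hz₀norm
  · rintro x' ⟨hx'traj, hx'close⟩
    set z' : ℤ →ᵇ X := BoundedContinuousFunction.ofNormedAddCommGroup (fun n => x' n - y n)
      continuous_of_discreteTopology ε (fun n => hx'close n) with hz'
    have hz'coe : ∀ n, z' n = x' n - y n := fun n => rfl
    have hz'rec : ∀ n, z' (n + 1) = A n (z' n) + hs z' n := by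
      intro n
      have e1 : y n + (x' n - y n) = x' n := by abel
      simp only [hhs, hz'coe, hd, e1, map_sub]
      rw [hx'traj n]
      abel
    have hv : ∀ n, (Φ z') n - z' n = 0 := by
      have hvrec : ∀ n, (fun m => (Φ z') m - z' m) (n + 1)
          = A n ((fun m => (Φ z') m - z' m) n) := by
        intro n
        simp only
        rw [hΦcoe, green_rec hC hlam hproj hbij hstab hunst (hsb z') n, ← hΦcoe, hz'rec n]
        simp only [map_sub]
        abel
      have hvbd : ∀ n, ‖(Φ z') n - z' n‖ ≤ ‖Φ z'‖ + ‖z'‖ := fun n =>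
        (norm_sub_le _ _).trans
          (add_le_add ((Φ z').norm_coe_le_norm n) (z'.norm_coe_le_norm n))
      exact homog_zero hC hlam hproj hcomm hbij hstab hunst hvbd hvrec
    have hfix' : Φ z' = z' := by
      ext n
      exact sub_eq_zero.mp (hv n)
    have hzz : z' = z₀ := hcontr.fixedPoint_unique hfix'
    funext n
    have e2 : x' n = y n + z' n := by rw [hz'coe]; abel
    rw [e2, hzz]
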